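/- Let n ≥ q ≥ 1 be integers, let v ∈ ℝⁿ have all entries positive, let X ∈ F_v, and let X⊥ be an n×(n−q) real matrix such that (X X⊥) is orthogonal. Then for every V ∈ T_X and every U ∈ N_X one has trace(Uᵀ V) = 0. -/

import Mathlib

open Matrix

lemma transpose_vecMulVec' {m n : Type*} (a : m → ℝ) (b : n → ℝ) :
    (vecMulVec a b)ᵀ = vecMulVec b a := by
  ext i j; simp [vecMulVec_apply, mul_comm]

lemma vecMulVec_mul' {m n p : Type*} [Fintype n] (a : m → ℝ) (b : n → ℝ)
    (M : Matrix n p ℝ) : vecMulVec a b * M = vecMulVec a (b ᵥ* M) := by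
  ext i j
  simp [vecMulVec_apply, mul_apply, vecMul, dotProduct, Finset.mul_sum, mul_assoc]

lemma trace_vecMulVec' {m : Type*} [Fintype m] (a b : m → ℝ) :
    Matrix.trace (vecMulVec a b) = a ⬝ᵥ b := by
  simp [Matrix.trace, vecMulVec_apply, dotProduct, Matrix.diag]

/-- For `X ∈ F_v` and `X⊥` with `(X X⊥)` orthogonal, every `V ∈ T_X` and every
`U ∈ N_X` satisfy `trace(Uᵀ V) = 0`, where
`T_X = {XΩ + X⊥K : Ωᵀ = −Ω, K (Xᵀv) = 0}` and `N_X = {XS + X⊥ u vᵀ X : Sᵀ = S, u ∈ ℝ^{n−q}}`. -/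
theorem stmt_6 (n q : ℕ) (hq : 1 ≤ q) (hnq : q ≤ n)
    (v : Fin n → ℝ) (hv : ∀ i, 0 < v i)
    (X : Matrix (Fin n) (Fin q) ℝ)
    (hX : Xᵀ * X = 1 ∧ ∃ c : Fin q → ℝ, X *ᵥ c = v)
    (Xp : Matrix (Fin n) (Fin (n - q)) ℝ)
    (hO : (fromCols X Xp)ᵀ * fromCols X Xp = 1)
    (V U : Matrix (Fin n) (Fin q) ℝ)
    (hV : ∃ (Ω : Matrix (Fin q) (Fin q) ℝ) (K : Matrix (Fin (n - q)) (Fin q) ℝ),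
      Ωᵀ = -Ω ∧ K *ᵥ (Xᵀ *ᵥ v) = 0 ∧ V = X * Ω + Xp * K)
    (hU : ∃ (S : Matrix (Fin q) (Fin q) ℝ) (u : Fin (n - q) → ℝ),
      Sᵀ = S ∧ U = X * S + vecMulVec (Xp *ᵥ u) (v ᵥ* X)) :
    Matrix.trace (Uᵀ * V) = 0 := by
  obtain ⟨hXX, -⟩ := hX
  obtain ⟨Ω, K, hΩ, hK, rfl⟩ := hV
  obtain ⟨S, u, hS, rfl⟩ := hU
  rw [transpose_fromCols, fromRows_mul_fromCols, ← fromBlocks_one, fromBlocks_inj] at hO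
  obtain ⟨-, h12, h21, h22⟩ := hO
  set a : Fin n → ℝ := Xp *ᵥ u with ha
  set b : Fin q → ℝ := v ᵥ* X with hb
  have hbv : b = Xᵀ *ᵥ v := by rw [hb, ← Matrix.mulVec_transpose]
  have haX : a ᵥ* X = 0 := by
    rw [ha, ← Matrix.mulVec_transpose, Matrix.mulVec_mulVec, h12, Matrix.zero_mulVec]
  have haXp : a ᵥ* Xp = u := by
    rw [ha, ← Matrix.mulVec_transpose, Matrix.mulVec_mulVec, h22, Matrix.one_mulVec]
  have hexp : (X * S + vecMulVec a b)ᵀ * (X * Ω + Xp * K)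
      = S * Ω + Sᵀ * (Xᵀ * Xp) * K + vecMulVec b ((a ᵥ* X) ᵥ* Ω)
        + vecMulVec b ((a ᵥ* Xp) ᵥ* K) := by
    rw [transpose_add, transpose_mul, transpose_vecMulVec']
    rw [Matrix.add_mul, Matrix.mul_add, Matrix.mul_add]
    have e1 : Sᵀ * Xᵀ * (X * Ω) = S * Ω := by
      rw [hS, Matrix.mul_assoc, ← Matrix.mul_assoc Xᵀ, hXX, Matrix.one_mul]
    have e2 : Sᵀ * Xᵀ * (Xp * K) = Sᵀ * (Xᵀ * Xp) * K := by
      rw [Matrix.mul_assoc, Matrix.mul_assoc, Matrix.mul_assoc]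
    have e3 : vecMulVec b a * (X * Ω) = vecMulVec b ((a ᵥ* X) ᵥ* Ω) := by
      rw [vecMulVec_mul', Matrix.vecMul_vecMul]
    have e4 : vecMulVec b a * (Xp * K) = vecMulVec b ((a ᵥ* Xp) ᵥ* K) := by
      rw [vecMulVec_mul', Matrix.vecMul_vecMul]
    rw [e1, e2, e3, e4]; abel
  rw [hexp, h12, haX, haXp]
  have t1 : Matrix.trace (S * Ω) = 0 := by
    have h : Matrix.trace (S * Ω) = -Matrix.trace (S * Ω) := by
      conv_lhs => rw [← Matrix.trace_transpose, transpose_mul, hΩ, hS,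
        Matrix.neg_mul, Matrix.trace_neg, trace_mul_comm]
    linarith
  have t4 : Matrix.trace (vecMulVec b (u ᵥ* K)) = 0 := by
    rw [trace_vecMulVec', dotProduct_comm, ← Matrix.dotProduct_mulVec, hbv, hK,
      dotProduct_zero]
  simp [t1, t4, trace_vecMulVec']
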